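/- Let k ≥ 3 and n ≥ k+3 be integers, and let S be a minimum super vertex-cut of the Johnson graph J(n,k). Then there is no element r ∈ [n] that is contained in every vertex of S; that is, for each r ∈ [n] some vertex of S omits r. -/

import Mathlib

open SimpleGraph Finset

/-- Vertex type of the Johnson graph `J(n,k)`: the `k`-element subsets of `[n]`. -/
abbrev JV (n k : ℕ) := {s : Finset (Fin n) // s.card = k}

/-- The Johnson graph `J(n,k)`: two `k`-subsets are adjacent iff their
intersection has exactly `k-1` elements. -/
def johnsonGraph (n k : ℕ) : SimpleGraph (JV n k) where
  Adj u v := u ≠ v ∧ (u.val ∩ v.val).card = k - 1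
  symm := by
    constructor
    intro u v h
    exact ⟨h.1.symm, by rw [Finset.inter_comm]; exact h.2⟩
  loopless := by
    constructor
    intro u h
    exact h.1 rfl

/-- `S` is a vertex-cut of `G` if deleting `S` disconnects `G`. -/
def IsVertexCut {V : Type*} (G : SimpleGraph V) (S : Set V) : Prop :=
  ¬ (G.induce Sᶜ).Preconnected

/-- `S` is a super vertex-cut of `G` if deleting `S` disconnects `G` and
leaves no isolated vertex. -/
def IsSuperVertexCut {V : Type*} (G : SimpleGraph V) (S : Set V) : Prop :=
  IsVertexCut G S ∧ ∀ v : ↥Sᶜ, ∃ w : ↥Sᶜ, (G.induce Sᶜ).Adj v w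

/-- The super-connectivity of `G`: the least cardinality of a super vertex-cut,
or `⊤` if none exists. -/
noncomputable def superConnectivity {V : Type*} [Fintype V] (G : SimpleGraph V) : ℕ∞ :=
  sInf {m : ℕ∞ | ∃ S : Finset V, IsSuperVertexCut G ↑S ∧ (S.card : ℕ∞) = m}

/-- `S` is a minimum super vertex-cut of `G`. -/
def IsMinSuperVertexCut {V : Type*} [Fintype V] (G : SimpleGraph V) (S : Finset V) : Prop :=
  IsSuperVertexCut G ↑S ∧ ∀ T : Finset V, IsSuperVertexCut G ↑T → S.card ≤ T.card

lemma swap_card {n k : ℕ} (hk : 1 ≤ k) (u : JV n k) {a b : Fin n}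
    (ha : a ∈ u.val) (hb : b ∉ u.val) :
    (insert b (u.val.erase a)).card = k := by
  rw [Finset.card_insert_of_notMem (fun h => hb (Finset.mem_of_mem_erase h)),
    Finset.card_erase_of_mem ha, u.2]
  omega

lemma swap_adj {n k : ℕ} (hk : 1 ≤ k) (u : JV n k) {a b : Fin n}
    (ha : a ∈ u.val) (hb : b ∉ u.val) :
    (johnsonGraph n k).Adj u ⟨insert b (u.val.erase a), swap_card hk u ha hb⟩ := by
  constructor
  · intro h
    have h2 : a ∈ insert b (u.val.erase a) := by
      have h3 : u.val = insert b (u.val.erase a) := Subtype.ext_iff.mp h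
      exact h3 ▸ ha
    rcases Finset.mem_insert.mp h2 with h3 | h3
    · exact hb (h3 ▸ ha)
    · exact (Finset.notMem_erase a _) h3
  · have hint : u.val ∩ insert b (u.val.erase a) = u.val.erase a := by
      ext x
      simp only [Finset.mem_inter, Finset.mem_insert, Finset.mem_erase]
      constructor
      · rintro ⟨hxu, (rfl | ⟨hxa, _⟩)⟩
        · exact absurd hxu hb
        · exact ⟨hxa, hxu⟩
      · rintro ⟨hxa, hxu⟩; exact ⟨hxu, Or.inr ⟨hxa, hxu⟩⟩
    rw [hint, Finset.card_erase_of_mem ha, u.2]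

lemma reach_aux {n k : ℕ} (hk : 1 ≤ k) (S : Finset (JV n k)) (r : Fin n)
    (hr : ∀ x ∈ S, r ∈ x.val) :
    ∀ m : ℕ, ∀ u v : JV n k, ∀ hu : r ∉ u.val, ∀ hv : r ∉ v.val,
      (u.val \ v.val).card = m →
      ((johnsonGraph n k).induce (↑S : Set (JV n k))ᶜ).Reachable
        ⟨u, fun h => hu (hr u (Finset.mem_coe.mp h))⟩
        ⟨v, fun h => hv (hr v (Finset.mem_coe.mp h))⟩ := by
  intro m
  induction m with
  | zero =>
    intro u v hu hv hcard
    have huv : u = v := by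
      have hsub : u.val ⊆ v.val := by
        rw [← Finset.sdiff_eq_empty_iff_subset]
        exact Finset.card_eq_zero.mp hcard
      exact Subtype.ext (Finset.eq_of_subset_of_card_le hsub (by rw [u.2, v.2]))
    subst huv
    exact Reachable.refl _
  | succ m ih =>
    intro u v hu hv hcard
    obtain ⟨a, ha⟩ := Finset.card_pos.mp (by omega : 0 < (u.val \ v.val).card)
    obtain ⟨hau, hav⟩ := Finset.mem_sdiff.mp ha
    have hvu : (v.val \ u.val).card = m + 1 := by
      rw [Finset.card_sdiff_comm (v.2.trans u.2.symm)]; exact hcard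
    obtain ⟨b, hb⟩ := Finset.card_pos.mp (by omega : 0 < (v.val \ u.val).card)
    obtain ⟨hbv, hbu⟩ := Finset.mem_sdiff.mp hb
    set u' : JV n k := ⟨insert b (u.val.erase a), swap_card hk u hau hbu⟩ with hu'def
    have hru' : r ∉ u'.val := by
      simp only [hu'def, Finset.mem_insert, Finset.mem_erase]
      rintro (rfl | ⟨_, h⟩)
      · exact hv hbv
      · exact hu h
    have hadj : ((johnsonGraph n k).induce (↑S : Set (JV n k))ᶜ).Adj
        ⟨u, fun h => hu (hr u (Finset.mem_coe.mp h))⟩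
        ⟨u', fun h => hru' (hr u' (Finset.mem_coe.mp h))⟩ :=
      swap_adj hk u hau hbu
    have hcard' : (u'.val \ v.val).card = m := by
      have : u'.val \ v.val = (u.val \ v.val).erase a := by
        ext x
        simp only [hu'def, Finset.mem_sdiff, Finset.mem_insert, Finset.mem_erase]
        constructor
        · rintro ⟨(rfl | ⟨hxa, hxu⟩), hxv⟩
          · exact absurd hbv hxv
          · exact ⟨hxa, hxu, hxv⟩
        · rintro ⟨hxa, hxu, hxv⟩; exact ⟨Or.inr ⟨hxa, hxu⟩, hxv⟩
      rw [this, Finset.card_erase_of_mem ha, hcard]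
      omega
    exact (hadj.reachable).trans (ih u' v hru' hv hcard')

theorem johnson_aux_main (n k : ℕ) (hk : 3 ≤ k) (hn : k + 3 ≤ n)
    (S : Finset (JV n k)) (hcut : ¬ ((johnsonGraph n k).induce (↑S : Set (JV n k))ᶜ).Preconnected) :
    ∀ r : Fin n, ∃ x ∈ S, r ∉ x.val := by
  by_contra hcon
  push_neg at hcon
  obtain ⟨r, hr⟩ := hcon
  have hk1 : 1 ≤ k := by omega
  apply hcut
  -- every vertex of Sᶜ reaches an r-free vertex
  have step1 : ∀ w : ↥((↑S : Set (JV n k))ᶜ), ∃ w' : JV n k, ∃ hw' : r ∉ w'.val,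
      ((johnsonGraph n k).induce (↑S : Set (JV n k))ᶜ).Reachable w
        ⟨w', fun h => hw' (hr w' (Finset.mem_coe.mp h))⟩ := by
    rintro ⟨w, hw⟩
    by_cases hrw : r ∈ w.val
    · have hlt : ∃ j : Fin n, j ∉ w.val := by
        by_contra hall
        push_neg at hall
        have := Finset.eq_univ_iff_forall.mpr hall
        have := congrArg Finset.card this
        rw [w.2, Finset.card_univ, Fintype.card_fin] at this
        omega
      obtain ⟨j, hj⟩ := hlt
      refine ⟨⟨insert j (w.val.erase r), swap_card hk1 w hrw hj⟩, ?_, ?_⟩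
      · simp only [Finset.mem_insert, Finset.mem_erase]
        rintro (rfl | ⟨h, _⟩)
        · exact hj hrw
        · exact h rfl
      · exact Adj.reachable (swap_adj hk1 w hrw hj)
    · exact ⟨w, hrw, Reachable.refl _⟩
  intro x y
  obtain ⟨x', hx', hrx⟩ := step1 x
  obtain ⟨y', hy', hry⟩ := step1 y
  exact hrx.trans ((reach_aux hk1 S r hr _ x' y' hx' hy' rfl).trans hry.symm)


/-- No element `r ∈ [n]` is contained in every vertex of a minimum super
vertex-cut of `J(n,k)`, for `k ≥ 3` and `n ≥ k+3`. -/
theorem not_mem_vertex_of_minSuperVertexCut (n k : ℕ) (hk : 3 ≤ k) (hn : k + 3 ≤ n)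
    (S : Finset (JV n k)) (hS : IsMinSuperVertexCut (johnsonGraph n k) S) :
    ∀ r : Fin n, ∃ x ∈ S, r ∉ x.val := by
  exact johnson_aux_main n k hk hn S hS.1.1
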